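/- Let K be a symmetric positive-definite m × m real matrix, J a diagonal 0-1 matrix, B a symmetric positive-semidefinite m × m matrix, and l, γ_A, γ_I > 0. Then the matrix J K + γ_A l I + γ_I l B K is invertible. -/

import Mathlib

open Matrix

lemma posSemidef_smul' {m : ℕ} {B : Matrix (Fin m) (Fin m) ℝ} (hB : B.PosSemidef)
    {c : ℝ} (hc : 0 ≤ c) : (c • B).PosSemidef := by
  refine ⟨by unfold Matrix.IsHermitian; rw [Matrix.conjTranspose_smul]; rw [show Bᴴ = B from hB.1.eq, star_trivial], fun x => ?_⟩
  exact (hB.smul hc).2 x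

lemma posDef_smul' {m : ℕ} {B : Matrix (Fin m) (Fin m) ℝ} (hB : B.PosDef)
    {c : ℝ} (hc : 0 < c) : (c • B).PosDef := by
  refine ⟨by unfold Matrix.IsHermitian; rw [Matrix.conjTranspose_smul]; rw [show Bᴴ = B from hB.1.eq, star_trivial], fun x hx => ?_⟩
  exact (hB.smul hc).2 hx

theorem stmt_19 (m : ℕ) (K J B : Matrix (Fin m) (Fin m) ℝ)
    (hK : K.PosDef) (hJdiag : J.IsDiag) (hJ01 : ∀ i, J i i = 0 ∨ J i i = 1)
    (hB : B.PosSemidef) (l γA γI : ℝ) (hl : 0 < l) (hγA : 0 < γA) (hγI : 0 < γI) :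
    IsUnit (J * K + (γA * l) • (1 : Matrix (Fin m) (Fin m) ℝ) + (γI * l) • (B * K)) := by
  have hKu : IsUnit K := hK.isUnit
  have hJeq : J = Matrix.diagonal (fun i => J i i) := by
    ext i j
    by_cases h : i = j
    · subst h; simp
    · simp [Matrix.diagonal_apply_ne _ h, hJdiag h]
  have hJpsd : J.PosSemidef := by
    rw [hJeq]
    refine posSemidef_diagonal_iff.mpr fun i => ?_
    rcases hJ01 i with h | h <;> simp [h]
  have hsum : (J + (γA * l) • K⁻¹ + (γI * l) • B).PosDef := by
    have h1 : ((γA * l) • K⁻¹).PosDef := posDef_smul' hK.inv (by positivity)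
    have h2 : ((γI * l) • B).PosSemidef := posSemidef_smul' hB (by positivity)
    exact (Matrix.PosDef.posSemidef_add hJpsd h1).add_posSemidef h2
  have key : (J + (γA * l) • K⁻¹ + (γI * l) • B) * K
      = J * K + (γA * l) • (1 : Matrix (Fin m) (Fin m) ℝ) + (γI * l) • (B * K) := by
    rw [add_mul, add_mul, smul_mul, smul_mul, Matrix.nonsing_inv_mul K
      (isUnit_iff_isUnit_det K |>.mp hKu)]
  rw [← key]
  exact hsum.isUnit.mul hKu
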